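/- Let R = ℤ[t^{±1}] be the ring of Laurent polynomials over ℤ and t ∈ R its distinguished variable. Let A ∈ M_2(R) be the matrix with rows (0, t) and (1, 0). Suppose B, V ∈ M_2(R) are such that B is invertible, A·B = B·A, and V·V = 1. Then there exist a, c ∈ R such that B is the matrix with rows (a, c·t) and (c, a), and moreover V = 1, or V = −1, or there exist p, q, r ∈ R with p² + q·r = 1 such that V is the matrix with rows (p, q) and (r, −p). -/
import Mathlib


open Matrix LaurentPolynomial

/-- The form of all extensions of the standard representation of `B₂` to the virtual
singular braid group `VSB₂`: if `B` is invertible and commutes with the standard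
matrix `A = !![0, t; 1, 0]` and `V² = 1`, then `B = !![a, c·t; c, a]` for some
`a, c`, and `V = 1`, `V = -1`, or `V = !![p, q; r, -p]` with `p² + q·r = 1`. -/
theorem extension_standard_rep_VSB2
    (B V : Matrix (Fin 2) (Fin 2) (LaurentPolynomial ℤ))
    (hB : IsUnit B)
    (hcomm : !![(0 : LaurentPolynomial ℤ), T 1; 1, 0] * B
        = B * !![(0 : LaurentPolynomial ℤ), T 1; 1, 0])
    (hV : V * V = 1) :
    (∃ a c : LaurentPolynomial ℤ, B = !![a, c * T 1; c, a]) ∧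
    (V = 1 ∨ V = -1 ∨
      ∃ p q r : LaurentPolynomial ℤ, p ^ 2 + q * r = 1 ∧ V = !![p, q; r, -p]) := by
  constructor
  · rw [Matrix.eta_fin_two B] at hcomm
    rw [Matrix.mul_fin_two, Matrix.mul_fin_two] at hcomm
    have h10 := congrFun (congrFun hcomm 1) 0
    have h00 := congrFun (congrFun hcomm 0) 0
    simp at h10 h00
    refine ⟨B 1 1, B 1 0, ?_⟩
    rw [Matrix.eta_fin_two B, h10, ← h00]; simp
  · rw [Matrix.eta_fin_two V] at hV ⊢
    rw [Matrix.mul_fin_two, Matrix.one_fin_two] at hV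
    set p := V 0 0; set q := V 0 1; set r := V 1 0; set s := V 1 1
    have h00 := congrFun (congrFun hV 0) 0
    have h01 := congrFun (congrFun hV 0) 1
    have h10 := congrFun (congrFun hV 1) 0
    have h11 := congrFun (congrFun hV 1) 1
    simp at h00 h01 h10 h11
    have hsq : (s - p) * (s + p) = 0 := by linear_combination h11 - h00
    rcases mul_eq_zero.mp hsq with h | h
    · -- s = p
      have hsp : s = p := sub_eq_zero.mp h
      by_cases hp : p + s = 0
      · have hp0 : p = 0 := by
          have h2p : (2 : LaurentPolynomial ℤ) * p = 0 := by
            rw [hsp] at hp; linear_combination hp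
          have h2 : (2 : LaurentPolynomial ℤ) ≠ 0 := by
            have hne : Polynomial.toLaurent (2 : Polynomial ℤ) ≠ 0 :=
              Polynomial.toLaurent_ne_zero.mpr (by norm_num)
            intro h2'
            exact hne (by rw [map_ofNat, h2'])
          exact (mul_eq_zero.mp h2p).resolve_left h2
        refine Or.inr (Or.inr ⟨p, q, r, ?_, ?_⟩)
        · rw [hp0]; simpa [hp0] using h00
        · rw [hsp, hp0]; norm_num
      · have hq : q = 0 := by
          have hq' : q * (p + s) = 0 := by linear_combination h01
          exact (mul_eq_zero.mp hq').resolve_right hp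
        have hr : r = 0 := by
          have hr' : r * (p + s) = 0 := by linear_combination h10
          exact (mul_eq_zero.mp hr').resolve_right hp
        have hp2 : (p - 1) * (p + 1) = 0 := by linear_combination h00 - r * hq
        rcases mul_eq_zero.mp hp2 with h1 | h1
        · refine Or.inl ?_
          rw [Matrix.one_fin_two]
          have hp1 : p = 1 := sub_eq_zero.mp h1
          rw [hp1, hsp, hq, hr, hp1]
        · refine Or.inr (Or.inl ?_)
          rw [Matrix.one_fin_two]
          have hp1 : p = -1 := eq_neg_of_add_eq_zero_left h1
          rw [hp1, hsp, hq, hr, hp1]; norm_num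
    · have hsp : s = -p := eq_neg_of_add_eq_zero_left h
      refine Or.inr (Or.inr ⟨p, q, r, ?_, ?_⟩)
      · rw [sq]; exact h00
      · rw [hsp]
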